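/- Let Σ = Σ_1 ∪ ⋯ ∪ Σ_k be a partition of the alphabet into pairwise disjoint nonempty blocks and let L ⊆ Σ* be closed under the associated partial commutation. Then for each i ∈ {1,…,k}, the projection satisfies π_{Σ_i}(L) = { u ∈ Σ_i* : ∃w ∈ L such that u ≡_L π_{Σ_i}(w) }. -/

import Mathlib

/-- The Nerode right-congruence of a language `L`: `u ≡_L v` iff
for all words `x`, `u ++ x ∈ L ↔ v ++ x ∈ L`. -/
def NerodeEq {α : Type*} (L : Set (List α)) (u v : List α) : Prop :=
  ∀ x : List α, u ++ x ∈ L ↔ v ++ x ∈ L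

/-- The Nerode right-congruence as a setoid on words. -/
def nerodeSetoid {α : Type*} (L : Set (List α)) : Setoid (List α) where
  r := NerodeEq L
  iseqv := ⟨fun _ _ => Iff.rfl, fun h x => (h x).symm, fun h1 h2 x => (h1 x).trans (h2 x)⟩

/-- A language is regular iff its Nerode right-congruence has finitely many classes. -/
def RegularLang {α : Type*} (L : Set (List α)) : Prop :=
  Finite (Quotient (nerodeSetoid L))

/-- The state complexity of `L`: the number of Nerode right-congruence classes. -/
noncomputable def sc {α : Type*} (L : Set (List α)) : ℕ :=
  Nat.card (Quotient (nerodeSetoid L))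

/-- A language is commutative if membership only depends on the number of
occurrences of each letter. -/
def CommutativeLang {α : Type*} [DecidableEq α] (L : Set (List α)) : Prop :=
  ∀ u v : List α, (∀ x : α, u.count x = v.count x) → (u ∈ L ↔ v ∈ L)

/-- A (commutative) language has a product-form minimal automaton iff for all words
`u, v`: `u ≡_L v` holds if and only if `x^{|u|_x} ≡_L x^{|v|_x}` for every letter `x`. -/
def HasProductForm {α : Type*} [DecidableEq α] (L : Set (List α)) : Prop :=
  ∀ u v : List α,
    NerodeEq L u v ↔
      ∀ x : α, NerodeEq L (List.replicate (u.count x) x) (List.replicate (v.count x) x)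

/-- With a partition of the alphabet encoded by a coloring `c : α → Fin k`
(block `Σ_i = c⁻¹(i)`), `projC c i w` is the projection `π_{Σ_i}(w)`. -/
def projC {α : Type*} {k : ℕ} (c : α → Fin k) (i : Fin k) (w : List α) : List α :=
  w.filter (fun x => c x = i)

/-- `L` is closed under the partial commutation associated with the partition
encoded by `c : α → Fin k`: letters in distinct blocks commute. -/
def PartialCommClosed {α : Type*} {k : ℕ} (c : α → Fin k) (L : Set (List α)) : Prop :=
  ∀ x y : α, c x ≠ c y → ∀ u v : List α,
    (u ++ x :: y :: v ∈ L ↔ u ++ y :: x :: v ∈ L)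

/-- If `L` is closed under the partial commutation associated with the partition
`Σ = Σ_1 ∪ ⋯ ∪ Σ_k`, then for each `i`,
`π_{Σ_i}(L) = {u ∈ Σ_i* : ∃ w ∈ L, u ≡_L π_{Σ_i}(w)}`. -/

private lemma swap_past {α : Type*} {k : ℕ} (c : α → Fin k) {L : Set (List α)}
    (hL : PartialCommClosed c L) (i : Fin k) (a : α) (ha : c a ≠ i) :
    ∀ q : List α, (∀ x ∈ q, c x = i) → ∀ p s : List α,
      (p ++ a :: (q ++ s) ∈ L ↔ p ++ q ++ a :: s ∈ L) := by
  intro q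
  induction q with
  | nil => simp
  | cons b q ih =>
    intro hq p s
    have h1 : p ++ a :: b :: (q ++ s) ∈ L ↔ p ++ b :: a :: (q ++ s) ∈ L :=
      hL a b (by rw [hq b List.mem_cons_self]; exact ha) p (q ++ s)
    have h2 := ih (fun x hx => hq x (List.mem_cons_of_mem b hx)) (p ++ [b]) s
    simp only [List.append_assoc, List.singleton_append] at h2 ⊢
    exact h1.trans h2

private lemma norm_form {α : Type*} {k : ℕ} (c : α → Fin k) {L : Set (List α)}
    (hL : PartialCommClosed c L) (i : Fin k) :
    ∀ w p s : List α, (p ++ w ++ s ∈ L ↔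
      p ++ (w.filter (fun x => c x = i)) ++ (w.filter (fun x => ¬ c x = i)) ++ s ∈ L) := by
  intro w
  induction w with
  | nil => simp
  | cons a w ih =>
    intro p s
    by_cases hc : c a = i
    · have := ih (p ++ [a]) s
      simp only [List.append_assoc, List.singleton_append] at this
      simpa [hc] using this
    · have h1 := ih (p ++ [a]) s
      simp only [List.append_assoc, List.singleton_append] at h1
      have h2 := swap_past c hL i a hc (w.filter (fun x => c x = i))
        (fun x hx => by simpa using (List.of_mem_filter hx)) p
        ((w.filter (fun x => ¬ c x = i)) ++ s)
      simp only [List.append_assoc] at h2 ⊢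
      simp only [hc, List.filter_cons, decide_eq_true_eq, if_neg hc, List.cons_append]
      simp only [not_false_iff, if_pos, List.cons_append]
      exact (h1.trans h2).trans (by simp [List.append_assoc])

theorem stmt14 {α : Type*} {k : ℕ} (c : α → Fin k) (hsurj : Function.Surjective c)
    (L : Set (List α)) (hL : PartialCommClosed c L) (i : Fin k) :
    projC c i '' L =
      {u : List α | (∀ x ∈ u, c x = i) ∧ ∃ w ∈ L, NerodeEq L u (projC c i w)} := by
  ext u
  constructor
  · rintro ⟨w, hw, rfl⟩
    refine ⟨fun x hx => by simpa using (List.of_mem_filter hx), w, hw, fun x => Iff.rfl⟩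
  · rintro ⟨hu, w, hw, hne⟩
    set r := w.filter (fun x => ¬ c x = i) with hr
    have hwL : w ∈ L ↔ projC c i w ++ r ∈ L := by
      have := norm_form c hL i w [] []
      simpa only [List.nil_append, List.append_nil, projC] using this
    have h2 : u ++ r ∈ L := (hne r).mpr (by simpa using hwL.mp hw)
    refine ⟨u ++ r, h2, ?_⟩
    have h3 : u.filter (fun x => c x = i) = u :=
      List.filter_eq_self.mpr (fun x hx => by simpa using hu x hx)
    have h4 : r.filter (fun x => c x = i) = [] :=
      List.filter_eq_nil_iff.mpr (fun x hx => by simpa using (List.of_mem_filter hx))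
    simp [projC, List.filter_append, h3, h4]
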